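/- Existence of regular Bohr sets: for every Bohr set B(Γ, γ) in ℤ/Nℤ there exists γ' with γ/2 ≤ γ' ≤ γ such that B(Γ, γ') is regular, i.e., for every η with |η| ≤ 1/(100|Γ|) one has (1 − 100|Γ||η|)·|B(Γ,γ')| ≤ |B(Γ, (1+η)γ')| ≤ (1 + 100|Γ||η|)·|B(Γ,γ')|. -/

import Mathlib

open Finset

/-- Distance from a real number to the nearest integer. -/
noncomputable def distInt (r : ℝ) : ℝ := |r - round r|

open scoped Classical in
/-- The Bohr set `B(Γ, γ) = {x ∈ ℤ/Nℤ : ‖tx/N‖ ≤ γ for all t ∈ Γ}`. -/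
noncomputable def bohr {N : ℕ} [NeZero N] (Γ : Finset (ZMod N)) (γ : ℝ) : Finset (ZMod N) :=
  Finset.univ.filter fun x => ∀ t ∈ Γ, distInt (((t * x).val : ℝ) / N) ≤ γ

lemma distInt_le_abs_sub_int (r : ℝ) (n : ℤ) : distInt r ≤ |r - n| := by
  rcases eq_or_ne (round r) n with h | h
  · rw [distInt, h]
  · have h1 : |r - round r| ≤ 1 / 2 := abs_sub_round r
    have h2 : (1 : ℝ) ≤ |(round r : ℝ) - n| := by
      have h3 : (1 : ℤ) ≤ |round r - n| := Int.one_le_abs (sub_ne_zero.mpr h)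
      calc (1:ℝ) = ((1:ℤ) : ℝ) := by norm_num
        _ ≤ ((|round r - n| : ℤ) : ℝ) := by exact_mod_cast h3
        _ = |(round r : ℝ) - n| := by push_cast; ring_nf
    have h3 : |(round r : ℝ) - n| ≤ |(round r : ℝ) - r| + |r - n| := abs_sub_le _ _ _
    have h4 : |(round r : ℝ) - r| = |r - round r| := abs_sub_comm _ _
    rw [distInt]
    linarith

lemma distInt_le_abs (r : ℝ) : distInt r ≤ |r| := by
  simpa using distInt_le_abs_sub_int r 0

lemma distInt_add_int (r : ℝ) (n : ℤ) : distInt (r + n) = distInt r := by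
  rw [distInt, distInt, round_add_intCast]
  congr 1
  push_cast
  ring

lemma mem_bohr {N : ℕ} [NeZero N] {Γ : Finset (ZMod N)} {γ : ℝ} {x : ZMod N} :
    x ∈ bohr Γ γ ↔ ∀ t ∈ Γ, distInt (((t * x).val : ℝ) / N) ≤ γ := by
  classical
  simp [bohr]

lemma bohr_mono {N : ℕ} [NeZero N] (Γ : Finset (ZMod N)) {γ₁ γ₂ : ℝ} (h : γ₁ ≤ γ₂) :
    bohr Γ γ₁ ⊆ bohr Γ γ₂ := by
  intro x hx
  rw [mem_bohr] at hx ⊢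
  exact fun t ht => (hx t ht).trans h

lemma zero_mem_bohr {N : ℕ} [NeZero N] (Γ : Finset (ZMod N)) {γ : ℝ} (h : 0 ≤ γ) :
    (0 : ZMod N) ∈ bohr Γ γ := by
  rw [mem_bohr]
  intro t ht
  simp [distInt, h]

noncomputable def sres {N : ℕ} [NeZero N] (w : ZMod N) : ℝ :=
  (w.val : ℝ) / N - round ((w.val : ℝ) / N)

lemma abs_sres {N : ℕ} [NeZero N] (w : ZMod N) : |sres w| = distInt ((w.val : ℝ) / N) := rfl

lemma distInt_val_sub_le {N : ℕ} [NeZero N] (u v : ZMod N) :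
    distInt (((u - v).val : ℝ) / N) ≤ |sres u - sres v| := by
  have hN : (N : ℝ) ≠ 0 := Nat.cast_ne_zero.mpr (NeZero.ne N)
  obtain ⟨m, hm⟩ : ∃ m : ℤ, ((u - v).val : ℤ) = (u.val : ℤ) - (v.val : ℤ) + N * m := by
    have hdvd : (N : ℤ) ∣ ((u - v).val : ℤ) - ((u.val : ℤ) - (v.val : ℤ)) := by
      apply (ZMod.intCast_zmod_eq_zero_iff_dvd _ N).mp
      push_cast
      rw [ZMod.natCast_val, ZMod.natCast_val, ZMod.natCast_val, ZMod.cast_id, ZMod.cast_id,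
        ZMod.cast_id]
      ring
    obtain ⟨m, hm⟩ := hdvd
    exact ⟨m, by linarith⟩
  have hval : (((u - v).val : ℝ) / N) = ((u.val : ℝ) / N - (v.val : ℝ) / N) + (m : ℝ) := by
    have h1 : ((u - v).val : ℝ) = (u.val : ℝ) - (v.val : ℝ) + (N : ℝ) * (m : ℝ) := by
      exact_mod_cast congrArg (Int.cast : ℤ → ℝ) hm
    rw [h1]
    field_simp
  rw [hval, distInt_add_int]
  set A := (u.val : ℝ) / N
  set B := (v.val : ℝ) / N
  have h2 : A - B = ((A - round A) - (B - round B)) + ((round A - round B : ℤ) : ℝ) := by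
    push_cast
    ring
  rw [h2, distInt_add_int]
  exact distInt_le_abs _

lemma abs_sub_lt_one_of_floor_eq {a b : ℝ} (h : ⌊a⌋ = ⌊b⌋) : |a - b| < 1 := by
  have h1 := Int.floor_le a
  have h2 := Int.floor_le b
  have h3 := Int.lt_floor_add_one a
  have h4 := Int.lt_floor_add_one b
  rw [h] at h1 h3
  rw [abs_sub_lt_iff]
  constructor <;> push_cast at * <;> linarith

lemma bohr_card_le {N : ℕ} [NeZero N] (Γ : Finset (ZMod N)) {ρ β : ℝ} (hρ : 0 < ρ)
    (h : β ≤ 3 * ρ) : (bohr Γ β).card ≤ 7 ^ Γ.card * (bohr Γ ρ).card := by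
  classical
  set f : ZMod N → (Γ → ℤ) := fun x t => ⌊sres ((t : ZMod N) * x) / ρ⌋ with hf
  have himg : (bohr Γ β).image f ⊆ Fintype.piFinset fun _ : Γ => Finset.Icc (-3 : ℤ) 3 := by
    intro v hv
    rw [Finset.mem_image] at hv
    obtain ⟨x, hx, rfl⟩ := hv
    rw [Fintype.mem_piFinset]
    intro t
    have h1 : |sres ((t : ZMod N) * x)| ≤ β := by
      rw [abs_sres]; exact (mem_bohr.mp hx) t t.2
    have h2 : |sres ((t : ZMod N) * x) / ρ| ≤ 3 := by
      rw [abs_div, abs_of_pos hρ, div_le_iff₀ hρ]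
      linarith
    rw [abs_le] at h2
    rw [Finset.mem_Icc]
    constructor
    · exact Int.le_floor.mpr (by exact_mod_cast h2.1)
    · exact_mod_cast (Int.floor_le _).trans h2.2
  have hcardimg : ((bohr Γ β).image f).card ≤ 7 ^ Γ.card := by
    calc ((bohr Γ β).image f).card
        ≤ (Fintype.piFinset fun _ : Γ => Finset.Icc (-3 : ℤ) 3).card := Finset.card_le_card himg
      _ = 7 ^ Γ.card := by
        rw [Fintype.card_piFinset]
        have h7 : (Finset.Icc (-3 : ℤ) 3).card = 7 := by rw [Int.card_Icc]; rfl
        simp [h7, Finset.prod_const, Fintype.card_coe]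
  have hfib : ∀ v ∈ (bohr Γ β).image f,
      ((bohr Γ β).filter fun x => f x = v).card ≤ (bohr Γ ρ).card := by
    intro v hv
    obtain ⟨x₀, hx₀⟩ : ((bohr Γ β).filter fun x => f x = v).Nonempty := by
      rw [Finset.mem_image] at hv
      obtain ⟨x, hx, hfx⟩ := hv
      exact ⟨x, Finset.mem_filter.mpr ⟨hx, hfx⟩⟩
    apply Finset.card_le_card_of_injOn (fun y => y - x₀)
    · intro y hy
      rw [Finset.mem_coe, Finset.mem_filter] at hy
      rw [Finset.mem_filter] at hx₀
      rw [Finset.mem_coe, mem_bohr]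
      intro t ht
      have key : t * (y - x₀) = t * y - t * x₀ := mul_sub t y x₀
      rw [key]
      have hfloor : ⌊sres (t * y) / ρ⌋ = ⌊sres (t * x₀) / ρ⌋ := by
        have e : f y ⟨t, ht⟩ = f x₀ ⟨t, ht⟩ := by rw [hy.2, hx₀.2]
        simpa [hf] using e
      have h1 : |sres (t * y) / ρ - sres (t * x₀) / ρ| < 1 := abs_sub_lt_one_of_floor_eq hfloor
      have h2 : |sres (t * y) - sres (t * x₀)| < ρ := by
        rw [div_sub_div_same, abs_div, abs_of_pos hρ, div_lt_one hρ] at h1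
        exact h1
      exact (distInt_val_sub_le _ _).trans h2.le
    · intro p _ q _ hpq
      exact sub_left_injective hpq
  calc (bohr Γ β).card ≤ (bohr Γ ρ).card * ((bohr Γ β).image f).card :=
      Finset.card_le_mul_card_image _ _ hfib
    _ ≤ (bohr Γ ρ).card * 7 ^ Γ.card := Nat.mul_le_mul_left _ hcardimg
    _ = 7 ^ Γ.card * (bohr Γ ρ).card := Nat.mul_comm _ _

noncomputable def bohrF {N : ℕ} [NeZero N] (Γ : Finset (ZMod N)) (x : ℝ) : ℝ :=
  Real.logb 2 ((bohr Γ x).card)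

lemma bohrF_mono {N : ℕ} [NeZero N] (Γ : Finset (ZMod N)) : Monotone (bohrF Γ) := by
  intro a b hab
  unfold bohrF
  rcases Nat.eq_zero_or_pos (bohr Γ a).card with h | h
  · rw [h]
    simp only [Nat.cast_zero, Real.logb_zero]
    rcases Nat.eq_zero_or_pos (bohr Γ b).card with h' | h'
    · rw [h']; simp
    · exact Real.logb_nonneg one_lt_two (by exact_mod_cast h')
  · apply Real.logb_le_logb_of_le one_lt_two (by exact_mod_cast h)
    exact_mod_cast Finset.card_le_card (bohr_mono Γ hab)

lemma bohr_card_pos {N : ℕ} [NeZero N] (Γ : Finset (ZMod N)) {a : ℝ} (ha : 0 ≤ a) :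
    (0 : ℝ) < (bohr Γ a).card := by
  exact_mod_cast Finset.card_pos.mpr ⟨0, zero_mem_bohr Γ ha⟩

lemma card_le_of_bohrF {N : ℕ} [NeZero N] (Γ : Finset (ZMod N)) {a b x : ℝ} (ha : 0 ≤ a)
    (hb : 0 ≤ b) (h : bohrF Γ b - bohrF Γ a ≤ x) :
    ((bohr Γ b).card : ℝ) ≤ (2 : ℝ) ^ x * (bohr Γ a).card := by
  have hca := bohr_card_pos Γ ha
  have hcb := bohr_card_pos Γ hb
  have h2 : (2:ℝ) ^ (bohrF Γ b) ≤ (2:ℝ) ^ (bohrF Γ a + x) :=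
    (Real.rpow_le_rpow_left_iff one_lt_two).mpr (by linarith)
  rwa [bohrF, bohrF, Real.rpow_logb two_pos (by norm_num) hcb, Real.rpow_add two_pos,
    Real.rpow_logb two_pos (by norm_num) hca, mul_comm] at h2

lemma two_rpow_le_one_add {x : ℝ} (h0 : 0 ≤ x) (h1 : x ≤ 1) : (2 : ℝ) ^ x ≤ 1 + x := by
  have hc := convexOn_exp.2 (Set.mem_univ (0 : ℝ)) (Set.mem_univ (Real.log 2))
    (by linarith : (0:ℝ) ≤ 1 - x) h0 (by ring)
  simp only [smul_eq_mul, mul_zero, zero_add, Real.exp_zero, mul_one,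
    Real.exp_log two_pos] at hc
  rw [Real.rpow_def_of_pos two_pos]
  calc Real.exp (Real.log 2 * x) = Real.exp (x * Real.log 2) := by rw [mul_comm]
    _ ≤ (1 - x) * 1 + x * 2 := by linarith [hc]
    _ = 1 + x := by ring

lemma one_sub_le_two_rpow_neg {x : ℝ} (h0 : 0 ≤ x) (h1 : x ≤ 1) : 1 - x ≤ (2 : ℝ) ^ (-x) := by
  have h2 : (2:ℝ) ^ x ≤ 1 + x := two_rpow_le_one_add h0 h1
  have hp : (0:ℝ) < (2:ℝ) ^ x := Real.rpow_pos_of_pos two_pos x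
  have key : (1 - x) * (2:ℝ) ^ x ≤ 1 := by nlinarith
  rw [Real.rpow_neg two_pos.le, inv_eq_one_div]
  exact (le_div_iff₀ hp).mpr key

lemma sum_incr_le {ι : Type*} [DecidableEq ι] (G : ℝ → ℝ) (hG : Monotone G) :
    ∀ (n : ℕ) (S : Finset ι), S.card = n → ∀ (y z : ι → ℝ) (C D : ℝ), C ≤ D →
    (∀ i ∈ S, C ≤ y i) → (∀ i ∈ S, z i ≤ D) → (∀ i ∈ S, y i < z i) →
    (∀ i ∈ S, ∀ j ∈ S, i ≠ j → z i ≤ y j ∨ z j ≤ y i) →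
    ∑ i ∈ S, (G (z i) - G (y i)) ≤ G D - G C := by
  intro n
  induction n with
  | zero =>
    intro S hS y z C D hCD _ _ _ _
    rw [Finset.card_eq_zero] at hS
    subst hS
    simp only [Finset.sum_empty]
    linarith [hG hCD]
  | succ n ih =>
    intro S hS y z C D hCD hCy hzD hyz hdisj
    have hne : S.Nonempty := by rw [← Finset.card_pos, hS]; omega
    obtain ⟨i₀, hi₀, hmax⟩ := S.exists_max_image z hne
    have hkey : ∀ j ∈ S.erase i₀, z j ≤ y i₀ := by
      intro j hj
      have hjS := Finset.mem_of_mem_erase hj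
      have hne' := Finset.ne_of_mem_erase hj
      rcases hdisj j hjS i₀ hi₀ hne' with h | h
      · exact h
      · exfalso
        have h1 := hyz j hjS
        have h2 := hmax j hjS
        linarith
    have hsum := ih (S.erase i₀) (by rw [Finset.card_erase_of_mem hi₀, hS]; omega) y z C (y i₀)
      (hCy i₀ hi₀) (fun i hi => hCy i (Finset.mem_of_mem_erase hi)) hkey
      (fun i hi => hyz i (Finset.mem_of_mem_erase hi))
      (fun i hi j hj hij => hdisj i (Finset.mem_of_mem_erase hi) j (Finset.mem_of_mem_erase hj) hij)
    rw [← Finset.add_sum_erase S _ hi₀]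
    have h1 : G (z i₀) ≤ G D := hG (hzD i₀ hi₀)
    linarith

lemma vitali_finset {ι : Type*} [DecidableEq ι] :
    ∀ (n : ℕ) (T : Finset ι), T.card ≤ n → ∀ (x r : ι → ℝ), (∀ i ∈ T, 0 < r i) →
    ∃ S ⊆ T, (∀ i ∈ S, ∀ j ∈ S, i ≠ j → x i + r i < x j - r j ∨ x j + r j < x i - r i) ∧
      (∀ i ∈ T, ∃ j ∈ S, x j - 3 * r j ≤ x i - r i ∧ x i + r i ≤ x j + 3 * r j) := by
  intro n
  induction n with
  | zero =>
    intro T hT x r hr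
    have hTe : T = ∅ := Finset.card_eq_zero.mp (Nat.le_zero.mp hT)
    subst hTe
    exact ⟨∅, Finset.Subset.refl _, by simp, by simp⟩
  | succ n ih =>
    intro T hT x r hr
    rcases T.eq_empty_or_nonempty with rfl | hne
    · exact ⟨∅, Finset.Subset.refl _, by simp, by simp⟩
    obtain ⟨i₀, hi₀, hmax⟩ := T.exists_max_image r hne
    set T' := T.filter (fun i => x i₀ + r i₀ < x i - r i ∨ x i + r i < x i₀ - r i₀) with hT'
    have hi₀T' : i₀ ∉ T' := by
      simp only [hT', Finset.mem_filter]
      rintro ⟨-, h | h⟩ <;> · have := hr i₀ hi₀; linarith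
    have hcard : T'.card ≤ n := by
      have h1 : T' ⊆ T := Finset.filter_subset _ _
      have h2 : T'.card < T.card := Finset.card_lt_card ⟨h1, fun hsub => hi₀T' (hsub hi₀)⟩
      omega
    obtain ⟨S', hS'T', hdisj', hcov'⟩ := ih T' hcard x r
      (fun i hi => hr i (Finset.filter_subset _ _ hi))
    refine ⟨insert i₀ S', ?_, ?_, ?_⟩
    · intro j hj
      rcases Finset.mem_insert.mp hj with rfl | hj'
      · exact hi₀
      · exact Finset.filter_subset _ _ (hS'T' hj')
    · intro i hi j hj hij
      rcases Finset.mem_insert.mp hi with rfl | hi' <;> rcases Finset.mem_insert.mp hj with rfl | hj'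
      · exact absurd rfl hij
      · have := (Finset.mem_filter.mp (hS'T' hj')).2
        tauto
      · have := (Finset.mem_filter.mp (hS'T' hi')).2
        tauto
      · exact hdisj' i hi' j hj' hij
    · intro i hi
      by_cases hiT' : i ∈ T'
      · obtain ⟨j, hj, hj2⟩ := hcov' i hiT'
        exact ⟨j, Finset.mem_insert_of_mem hj, hj2⟩
      · refine ⟨i₀, Finset.mem_insert_self _ _, ?_, ?_⟩ <;> ·
          have hnot : ¬(x i₀ + r i₀ < x i - r i ∨ x i + r i < x i₀ - r i₀) := fun h =>
            hiT' (Finset.mem_filter.mpr ⟨hi, h⟩)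
          push_neg at hnot
          have hri : r i ≤ r i₀ := hmax i hi
          obtain ⟨hn1, hn2⟩ := hnot
          have := hr i hi
          linarith

lemma length_le_sum {ι : Type*} (S : Finset ι) (p q : ι → ℝ) (hpq : ∀ i ∈ S, p i ≤ q i)
    (c d : ℝ) (hsub : Set.Icc c d ⊆ ⋃ i ∈ S, Set.Ioo (p i) (q i)) :
    d - c ≤ ∑ i ∈ S, (q i - p i) := by
  rcases le_or_gt d c with h | h
  · calc d - c ≤ 0 := by linarith
      _ ≤ _ := Finset.sum_nonneg fun i hi => by linarith [hpq i hi]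
  · have h1 : MeasureTheory.volume (Set.Icc c d)
        ≤ ∑ i ∈ S, MeasureTheory.volume (Set.Ioo (p i) (q i)) :=
      le_trans (MeasureTheory.measure_mono hsub) (MeasureTheory.measure_biUnion_finset_le _ _)
    rw [Real.volume_Icc] at h1
    simp only [Real.volume_Ioo] at h1
    rw [← ENNReal.ofReal_sum_of_nonneg (fun i hi => by linarith [hpq i hi])] at h1
    exact (ENNReal.ofReal_le_ofReal_iff (Finset.sum_nonneg fun i hi => by linarith [hpq i hi])).mp h1

lemma exists_good {N : ℕ} [NeZero N] (Γ : Finset (ZMod N)) (γ : ℝ) (hγ0 : 0 < γ)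
    (hk : 1 ≤ Γ.card) :
    ∃ a : ℝ, γ / 2 ≤ a ∧ a ≤ γ ∧ ∀ u : ℝ, 0 < u → u ≤ γ / (100 * Γ.card) →
      bohrF Γ (a + u) - bohrF Γ (a - u) ≤ 100 * Γ.card / γ * u := by
  classical
  by_contra hcon
  push_neg at hcon
  set k : ℝ := (Γ.card : ℝ) with hkdef
  have hk1 : (1 : ℝ) ≤ k := by rw [hkdef]; exact_mod_cast hk
  set u₀ : ℝ := γ / (100 * k) with hu₀def
  set L : ℝ := 100 * k / γ with hLdef
  have hu₀ : 0 < u₀ := by positivity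
  have hL : 0 < L := by positivity
  have hu₀γ : u₀ ≤ γ / 100 := by
    rw [hu₀def]
    apply div_le_div_of_nonneg_left hγ0.le (by norm_num)
    nlinarith
  -- choose bad witnesses
  choose U hU0 hU1 hU2 using fun a : Set.Icc (γ / 2) γ => hcon a a.2.1 a.2.2
  have hcov : Set.Icc (γ / 2) γ
      ⊆ ⋃ a : Set.Icc (γ / 2) γ, Set.Ioo ((a : ℝ) - U a) ((a : ℝ) + U a) := by
    intro b hb
    have h0 := hU0 ⟨b, hb⟩
    exact Set.mem_iUnion.mpr ⟨⟨b, hb⟩, ⟨by simp; linarith, by simp; linarith⟩⟩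
  obtain ⟨T, hT⟩ := isCompact_Icc.elim_finite_subcover _ (fun a => isOpen_Ioo) hcov
  obtain ⟨S, hST, hdisj, hcov3⟩ := vitali_finset T.card T le_rfl (fun a => (a : ℝ)) U
    (fun i _ => hU0 i)
  have hcov' : Set.Icc (γ / 2) γ
      ⊆ ⋃ j ∈ S, Set.Ioo ((j : ℝ) - 3 * U j) ((j : ℝ) + 3 * U j) := by
    intro b hb
    have hbT := hT hb
    rw [Set.mem_iUnion₂] at hbT ⊢
    obtain ⟨i, hiT, hbI⟩ := hbT
    obtain ⟨j, hjS, hj1, hj2⟩ := hcov3 i hiT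
    exact ⟨j, hjS, ⟨by linarith [hbI.1], by linarith [hbI.2]⟩⟩
  have hlen : γ - γ / 2 ≤ ∑ j ∈ S, (((j : ℝ) + 3 * U j) - ((j : ℝ) - 3 * U j)) :=
    length_le_sum S _ _ (fun i _ => by linarith [hU0 i]) _ _ hcov'
  have hsum6 : ∑ j ∈ S, (((j : ℝ) + 3 * U j) - ((j : ℝ) - 3 * U j)) = 6 * ∑ j ∈ S, U j := by
    rw [Finset.mul_sum]
    exact Finset.sum_congr rfl fun j _ => by ring
  have hSne : S.Nonempty := by
    rcases S.eq_empty_or_nonempty with rfl | h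
    · exfalso
      rw [hsum6] at hlen
      simp at hlen
      linarith
    · exact h
  set C : ℝ := γ / 2 - u₀ with hCdef
  set D : ℝ := γ + u₀ with hDdef
  have hCpos : 0 < C := by rw [hCdef]; linarith
  have hD3C : D ≤ 3 * C := by rw [hCdef, hDdef]; linarith
  -- total mass bound
  have hFDC : bohrF Γ D - bohrF Γ C ≤ 3 * k := by
    have hcard := bohr_card_le Γ hCpos hD3C
    have hcC := bohr_card_pos Γ hCpos.le
    have h1 : bohrF Γ D ≤ Real.logb 2 ((7 : ℝ) ^ Γ.card * (bohr Γ C).card) := by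
      apply Real.logb_le_logb_of_le one_lt_two (bohr_card_pos Γ (by rw [hDdef]; positivity))
      calc ((bohr Γ D).card : ℝ) ≤ ((7 ^ Γ.card * (bohr Γ C).card : ℕ) : ℝ) := by
            exact_mod_cast hcard
        _ = (7 : ℝ) ^ Γ.card * (bohr Γ C).card := by push_cast; ring
    rw [Real.logb_mul (by positivity) (ne_of_gt hcC), ← Real.rpow_natCast 7 Γ.card,
      Real.logb_rpow_eq_mul_logb_of_pos (by norm_num)] at h1
    have h7 : Real.logb 2 7 ≤ 3 := by
      have h8 : (7 : ℝ) ≤ 2 ^ (3 : ℝ) := by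
        rw [show (3:ℝ) = ((3:ℕ):ℝ) by norm_num, Real.rpow_natCast]
        norm_num
      calc Real.logb 2 7 ≤ Real.logb 2 (2 ^ (3:ℝ)) :=
            Real.logb_le_logb_of_le one_lt_two (by norm_num) h8
        _ = 3 := by rw [Real.logb_rpow] <;> norm_num
    have hklogb : (Γ.card : ℝ) * Real.logb 2 7 ≤ 3 * k := by
      rw [← hkdef]
      nlinarith [Real.logb_nonneg one_lt_two (show (1:ℝ) ≤ 7 by norm_num)]
    have h2 : bohrF Γ C = Real.logb 2 ((bohr Γ C).card) := rfl
    rw [bohrF] at h1 ⊢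
    nlinarith
  -- sum of masses
  have hlt : ∑ j ∈ S, (L * U j)
      < ∑ j ∈ S, (bohrF Γ ((j : ℝ) + U j) - bohrF Γ ((j : ℝ) - U j)) :=
    Finset.sum_lt_sum_of_nonempty hSne fun j _ => hU2 j
  have hsummass : ∑ j ∈ S, (bohrF Γ ((j : ℝ) + U j) - bohrF Γ ((j : ℝ) - U j))
      ≤ bohrF Γ D - bohrF Γ C := by
    apply sum_incr_le (bohrF Γ) (bohrF_mono Γ) S.card S rfl
      (fun j => (j : ℝ) - U j) (fun j => (j : ℝ) + U j) C D
    · rw [hCdef, hDdef]; linarith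
    · intro i _
      have h1 : γ / 2 ≤ (i : ℝ) := i.2.1
      have := hU1 i
      rw [hCdef]; linarith
    · intro i _
      have h2 : (i : ℝ) ≤ γ := i.2.2
      have := hU1 i
      rw [hDdef]; linarith
    · intro i _
      have := hU0 i
      linarith
    · intro i hi j hj hij
      rcases hdisj i hi j hj hij with h | h
      · left; linarith
      · right; linarith
  -- wrap up
  have e1 : ∑ j ∈ S, (L * U j) = L * ∑ j ∈ S, U j := by rw [Finset.mul_sum]
  have hU12 : γ / 12 ≤ ∑ j ∈ S, U j := by
    rw [hsum6] at hlen
    linarith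
  have hfinal : L * (γ / 12) ≤ L * ∑ j ∈ S, U j := mul_le_mul_of_nonneg_left hU12 hL.le
  have hcomp : L * (γ / 12) = 100 * k / 12 := by
    rw [hLdef]
    field_simp
  rw [e1] at hlt
  rw [hcomp] at hfinal
  nlinarith

set_option maxHeartbeats 1000000 in
/-- Bourgain's regularity lemma: every Bohr set has a regular radius `γ' ∈ [γ/2, γ]`. -/
theorem stmt10 {N : ℕ} [NeZero N] (Γ : Finset (ZMod N)) (γ : ℝ) (hγ0 : 0 < γ)
    (hγ : γ ≤ 1 / 2) :
    ∃ γ' : ℝ, γ / 2 ≤ γ' ∧ γ' ≤ γ ∧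
      ∀ η : ℝ, |η| ≤ 1 / (100 * Γ.card) →
        (1 - 100 * Γ.card * |η|) * ((bohr Γ γ').card : ℝ) ≤
            ((bohr Γ ((1 + η) * γ')).card : ℝ) ∧
          ((bohr Γ ((1 + η) * γ')).card : ℝ) ≤
            (1 + 100 * Γ.card * |η|) * ((bohr Γ γ').card : ℝ) := by
  rcases Nat.eq_zero_or_pos Γ.card with hk | hk
  · refine ⟨γ, by linarith, le_refl γ, ?_⟩
    intro η hη
    rw [hk] at hη ⊢
    simp only [Nat.cast_zero, mul_zero, div_zero] at hη
    have hη0 : η = 0 := abs_nonpos_iff.mp hη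
    subst hη0
    norm_num
  · obtain ⟨a, ha1, ha2, hgood⟩ := exists_good Γ γ hγ0 hk
    refine ⟨a, ha1, ha2, ?_⟩
    intro η hη
    set k : ℝ := (Γ.card : ℝ) with hkdef
    have hk1 : (1 : ℝ) ≤ k := by rw [hkdef]; exact_mod_cast hk
    have ha0 : 0 < a := by linarith
    rcases eq_or_ne η 0 with rfl | hη0
    · norm_num
    · have hηpos : 0 < |η| := abs_pos.mpr hη0
      set u : ℝ := |η| * a with hu
      have hu0 : 0 < u := by positivity
      have hub : u ≤ γ / (100 * Γ.card) := by
        calc u ≤ 1 / (100 * k) * γ :=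
            mul_le_mul hη ha2 ha0.le (by positivity)
          _ = γ / (100 * k) := by ring
          _ = γ / (100 * Γ.card) := by rw [hkdef]
      have hF := hgood u hu0 hub
      set x : ℝ := 100 * k * |η| with hx
      have hx0 : 0 ≤ x := by positivity
      have hx1 : x ≤ 1 := by
        calc x = 100 * k * |η| := rfl
          _ ≤ 100 * k * (1 / (100 * k)) := by
            apply mul_le_mul_of_nonneg_left hη (by positivity)
          _ = 1 := by field_simp
      have hηsmall : |η| ≤ 1 := by
        nlinarith
      have hau0 : 0 ≤ a - u := by
        rw [hu]
        nlinarith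
      have hau0' : 0 ≤ a + u := by positivity
      have hFx : bohrF Γ (a + u) - bohrF Γ (a - u) ≤ x := by
        refine hF.trans ?_
        have hda : a / γ ≤ 1 := (div_le_one hγ0).mpr ha2
        have heq : 100 * Γ.card / γ * u = x * (a / γ) := by
          rw [hx, hu, ← hkdef]
          field_simp
        rw [heq]
        exact mul_le_of_le_one_right (by positivity) hda
      have h2x := two_rpow_le_one_add hx0 hx1
      have hp : (0 : ℝ) < (2 : ℝ) ^ x := Real.rpow_pos_of_pos two_pos x
      have hcau : (0 : ℝ) ≤ ((bohr Γ (a - u)).card : ℝ) := Nat.cast_nonneg _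
      have hca : (0 : ℝ) ≤ ((bohr Γ a).card : ℝ) := Nat.cast_nonneg _
      have hcapos : (0 : ℝ) < ((bohr Γ a).card : ℝ) := bohr_card_pos Γ ha0.le
      rcases lt_or_gt_of_ne hη0 with hneg | hpos
      · -- η < 0 : radius is a - u
        have habs : |η| = -η := abs_of_neg hneg
        have hrad : (1 + η) * a = a - u := by rw [hu, habs]; ring
        rw [hrad]
        constructor
        · -- (1-x) * card a ≤ card (a-u)
          have hgF : bohrF Γ a - bohrF Γ (a - u) ≤ x := by
            have hm := bohrF_mono Γ (show a ≤ a + u by linarith)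
            linarith
          have hcard := card_le_of_bohrF Γ hau0 ha0.le hgF
          nlinarith [mul_le_mul_of_nonneg_left hcard (show (0:ℝ) ≤ 1 - x by linarith),
            mul_le_mul_of_nonneg_right h2x hcau, sq_nonneg x]
        · -- card (a-u) ≤ (1+x) * card a
          have hmono : ((bohr Γ (a - u)).card : ℝ) ≤ ((bohr Γ a).card : ℝ) := by
            exact_mod_cast Finset.card_le_card (bohr_mono Γ (by linarith))
          nlinarith
      · -- η > 0 : radius is a + u
        have habs : |η| = η := abs_of_pos hpos
        have hrad : (1 + η) * a = a + u := by rw [hu, habs]; ring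
        rw [hrad]
        constructor
        · have hmono : ((bohr Γ a).card : ℝ) ≤ ((bohr Γ (a + u)).card : ℝ) := by
            exact_mod_cast Finset.card_le_card (bohr_mono Γ (by linarith))
          have hexp : (1 - x) * ((bohr Γ a).card : ℝ)
              = ((bohr Γ a).card : ℝ) - x * ((bohr Γ a).card : ℝ) := by ring
          have h0 : 0 ≤ x * ((bohr Γ a).card : ℝ) := mul_nonneg hx0 hca
          linarith
        · have hgF : bohrF Γ (a + u) - bohrF Γ a ≤ x := by
            have hm := bohrF_mono Γ (show a - u ≤ a by linarith)
            linarith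
          have hcard := card_le_of_bohrF Γ ha0.le hau0' hgF
          have h1 : (2:ℝ) ^ x * ((bohr Γ a).card : ℝ) ≤ (1 + x) * ((bohr Γ a).card : ℝ) :=
            mul_le_mul_of_nonneg_right h2x hca
          linarith
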